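/- arXiv:1507.08908 — 2 statements merged into one kernel-verified Lean document; each statement's English description precedes it below -/
import Mathlib

section
/- Let (A,·,α) be a commutative Hom-associative superalgebra with an even derivation D of (A,·) such that αD = Dα, and let λ ∈ ℂ be fixed. Define x∘y = x·D(y) + λ x·y and, on homogeneous elements, [x,y]⁻ = x·D(y) − (−1)^{|x||y|} y·D(x). Then (A, [·,·]⁻, ∘, α) is a super Hom-Gel'fand-Dorfman bialgebra. -/
noncomputable section

/-- The sign `(-1)^{|x||y|}` attached to parities `i, j` in `ℤ₂`. -/
def sg (i j : ZMod 2) : ℂ := (-1 : ℂ) ^ (i.val * j.val)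

variable {A : Type*} [AddCommGroup A] [Module ℂ A]

/-- `gr` makes `A` into a superspace: `A = A₀ ⊕ A₁`. -/
def IsSupergrading (gr : ZMod 2 → Submodule ℂ A) : Prop :=
  (∀ x : A, ∃ x0 ∈ gr 0, ∃ x1 ∈ gr 1, x = x0 + x1) ∧ (gr 0 ⊓ gr 1 = ⊥)

/-- An even linear map: it preserves the grading. -/
def EvenLin (gr : ZMod 2 → Submodule ℂ A) (α : A →ₗ[ℂ] A) : Prop :=
  ∀ i : ZMod 2, ∀ x ∈ gr i, α x ∈ gr i

/-- An even bilinear map: it adds parities. -/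
def EvenBilin (gr : ZMod 2 → Submodule ℂ A) (m : A →ₗ[ℂ] A →ₗ[ℂ] A) : Prop :=
  ∀ i j : ZMod 2, ∀ x ∈ gr i, ∀ y ∈ gr j, m x y ∈ gr (i + j)

/-- A Hom-Lie superalgebra structure on the superspace `(A, gr)`. -/
def HomLieSuper (gr : ZMod 2 → Submodule ℂ A) (br : A →ₗ[ℂ] A →ₗ[ℂ] A)
    (α : A →ₗ[ℂ] A) : Prop :=
  EvenLin gr α ∧ EvenBilin gr br ∧
  (∀ (i j : ZMod 2), ∀ x ∈ gr i, ∀ y ∈ gr j, br x y = -(sg i j • br y x)) ∧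
  (∀ (i j k : ZMod 2), ∀ x ∈ gr i, ∀ y ∈ gr j, ∀ z ∈ gr k,
    sg i k • br (br x y) (α z) + sg i j • br (br y z) (α x)
      + sg j k • br (br z x) (α y) = 0)

/-- A Hom-Novikov superalgebra structure on the superspace `(A, gr)`. -/
def HomNovikovSuper (gr : ZMod 2 → Submodule ℂ A) (c : A →ₗ[ℂ] A →ₗ[ℂ] A)
    (α : A →ₗ[ℂ] A) : Prop :=
  EvenLin gr α ∧ EvenBilin gr c ∧
  (∀ (i j k : ZMod 2), ∀ x ∈ gr i, ∀ y ∈ gr j, ∀ z ∈ gr k,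
    c (c x y) (α z) - c (α x) (c y z) = sg i j • (c (c y x) (α z) - c (α y) (c x z))) ∧
  (∀ (i j k : ZMod 2), ∀ x ∈ gr i, ∀ y ∈ gr j, ∀ z ∈ gr k,
    c (c x y) (α z) = sg j k • c (c x z) (α y))

/-- A super Hom-Gel'fand-Dorfman bialgebra structure on the superspace `(A, gr)`. -/
def SuperHomGD (gr : ZMod 2 → Submodule ℂ A) (br c : A →ₗ[ℂ] A →ₗ[ℂ] A)
    (α : A →ₗ[ℂ] A) : Prop :=
  HomLieSuper gr br α ∧ HomNovikovSuper gr c α ∧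
  (∀ (i j k : ZMod 2), ∀ x ∈ gr i, ∀ y ∈ gr j, ∀ z ∈ gr k,
    br (c x y) (α z) - sg j k • br (c x z) (α y) + c (br x y) (α z)
      - sg j k • c (br x z) (α y) - c (α x) (br y z) = 0)

/-- A Lie superalgebra structure on the superspace `(A, gr)`. -/
def LieSuper (gr : ZMod 2 → Submodule ℂ A) (br : A →ₗ[ℂ] A →ₗ[ℂ] A) : Prop :=
  EvenBilin gr br ∧
  (∀ (i j : ZMod 2), ∀ x ∈ gr i, ∀ y ∈ gr j, br x y = -(sg i j • br y x)) ∧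
  (∀ (i j k : ZMod 2), ∀ x ∈ gr i, ∀ y ∈ gr j, ∀ z ∈ gr k,
    sg i k • br (br x y) z + sg i j • br (br y z) x + sg j k • br (br z x) y = 0)

/-- A Novikov superalgebra structure on the superspace `(A, gr)`. -/
def NovikovSuper (gr : ZMod 2 → Submodule ℂ A) (c : A →ₗ[ℂ] A →ₗ[ℂ] A) : Prop :=
  EvenBilin gr c ∧
  (∀ (i j k : ZMod 2), ∀ x ∈ gr i, ∀ y ∈ gr j, ∀ z ∈ gr k,
    c (c x y) z - c x (c y z) = sg i j • (c (c y x) z - c y (c x z))) ∧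
  (∀ (i j k : ZMod 2), ∀ x ∈ gr i, ∀ y ∈ gr j, ∀ z ∈ gr k,
    c (c x y) z = sg j k • c (c x z) y)

/-- A super Gel'fand-Dorfman bialgebra structure on the superspace `(A, gr)`. -/
def SuperGD (gr : ZMod 2 → Submodule ℂ A) (br c : A →ₗ[ℂ] A →ₗ[ℂ] A) : Prop :=
  LieSuper gr br ∧ NovikovSuper gr c ∧
  (∀ (i j k : ZMod 2), ∀ x ∈ gr i, ∀ y ∈ gr j, ∀ z ∈ gr k,
    br (c x y) z - sg j k • br (c x z) y + c (br x y) z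
      - sg j k • c (br x z) y - c x (br y z) = 0)


/-- A commutative Hom-associative superalgebra structure on the superspace `(A, gr)`. -/
def CommHomAssocSuper {A : Type*} [AddCommGroup A] [Module ℂ A]
    (gr : ZMod 2 → Submodule ℂ A) (m : A →ₗ[ℂ] A →ₗ[ℂ] A) (α : A →ₗ[ℂ] A) : Prop :=
  EvenLin gr α ∧ EvenBilin gr m ∧
  (∀ (i j : ZMod 2), ∀ x ∈ gr i, ∀ y ∈ gr j, m x y = sg i j • m y x) ∧
  (∀ (i j k : ZMod 2), ∀ x ∈ gr i, ∀ y ∈ gr j, ∀ z ∈ gr k,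
    m (α x) (m y z) = m (m x y) (α z))

/-- `D` is a derivation of the (bilinear) product `m`. -/
def IsDer {A : Type*} [AddCommGroup A] [Module ℂ A]
    (m : A →ₗ[ℂ] A →ₗ[ℂ] A) (D : A →ₗ[ℂ] A) : Prop :=
  ∀ x y : A, D (m x y) = m (D x) y + m x (D y)


private lemma zv1' : ZMod.val (1 : ZMod 2) = 1 := rfl

lemma sg00 : sg 0 0 = 1 := by norm_num [sg]
lemma sg01 : sg 0 1 = 1 := by norm_num [sg]
lemma sg10 : sg 1 0 = 1 := by norm_num [sg]
lemma sg11 : sg 1 1 = -1 := by norm_num [sg, zv1']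

lemma sg_symm (i j : ZMod 2) : sg i j = sg j i := by
  fin_cases i <;> fin_cases j <;> norm_num [sg, zv1', Nat.mul_comm]

lemma sg_add_left (i j k : ZMod 2) : sg (i + j) k = sg i k * sg j k := by
  have key : ∀ a : ZMod 2, a = 0 ∨ a = 1 := by decide
  rcases key i with rfl | rfl <;> rcases key j with rfl | rfl <;> rcases key k with rfl | rfl <;>
    norm_num [sg, zv1', show ZMod.val (2 : ZMod 2) = 0 from rfl,
      show (1 + 1 : ZMod 2) = 0 from rfl]

lemma sg_cases (i j : ZMod 2) : sg i j = 1 ∨ sg i j = -1 := by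
  fin_cases i <;> fin_cases j <;> norm_num [sg, ZMod.val]

section perm
variable (gr : ZMod 2 → Submodule ℂ A) (m : A →ₗ[ℂ] A →ₗ[ℂ] A) (α : A →ₗ[ℂ] A)
variable (hcom : ∀ (i j : ZMod 2), ∀ x ∈ gr i, ∀ y ∈ gr j, m x y = sg i j • m y x)
variable (hassoc : ∀ (i j k : ZMod 2), ∀ x ∈ gr i, ∀ y ∈ gr j, ∀ z ∈ gr k,
    m (α x) (m y z) = m (m x y) (α z))

include hcom in
lemma P_yx {i j : ZMod 2} {x y : A} (hx : x ∈ gr i) (hy : y ∈ gr j) (w : A) :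
    m (m y x) w = sg i j • m (m x y) w := by
  rw [hcom j i y hy x hx, map_smul, LinearMap.smul_apply, sg_symm]

include hcom hassoc in
lemma P_xzy {i j k : ZMod 2} {x y z : A} (hx : x ∈ gr i) (hy : y ∈ gr j) (hz : z ∈ gr k) :
    m (m x z) (α y) = sg j k • m (m x y) (α z) := by
  rw [← hassoc i k j x hx z hz y hy, hcom k j z hz y hy, map_smul,
    hassoc i j k x hx y hy z hz, sg_symm]

include hcom hassoc in
lemma P_zxy {i j k : ZMod 2} {x y z : A} (hx : x ∈ gr i) (hy : y ∈ gr j) (hz : z ∈ gr k) :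
    m (m z x) (α y) = (sg i k * sg j k) • m (m x y) (α z) := by
  rw [P_yx gr m hcom hx hz, P_xzy gr m α hcom hassoc hx hy hz, smul_smul]

include hcom hassoc in
lemma P_yzx {i j k : ZMod 2} {x y z : A} (hx : x ∈ gr i) (hy : y ∈ gr j) (hz : z ∈ gr k) :
    m (m y z) (α x) = (sg i k * sg i j) • m (m x y) (α z) := by
  rw [P_xzy gr m α hcom hassoc hy hx hz, P_yx gr m hcom hx hy, smul_smul]

include hcom hassoc in
lemma P_zyx {i j k : ZMod 2} {x y z : A} (hx : x ∈ gr i) (hy : y ∈ gr j) (hz : z ∈ gr k) :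
    m (m z y) (α x) = (sg j k * (sg i k * sg i j)) • m (m x y) (α z) := by
  rw [P_yx gr m hcom hy hz, P_yzx gr m α hcom hassoc hx hy hz, smul_smul]

end perm

/-- If `(A, ·, α)` is a commutative Hom-associative superalgebra with an
even derivation `D` commuting with `α` and `λ ∈ ℂ`, then with `x∘y = x·D(y) + λ x·y` and
`[x,y]⁻ = x·D(y) − (−1)^{|x||y|} y·D(x)` (on homogeneous elements),
`(A, [·,·]⁻, ∘, α)` is a super Hom-Gel'fand-Dorfman bialgebra. -/
theorem superHomGD_of_commHomAssoc
    {A : Type*} [AddCommGroup A] [Module ℂ A]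
    (gr : ZMod 2 → Submodule ℂ A) (hgr : IsSupergrading gr)
    (m : A →ₗ[ℂ] A →ₗ[ℂ] A) (α : A →ₗ[ℂ] A)
    (hm : CommHomAssocSuper gr m α)
    (D : A →ₗ[ℂ] A) (hDeven : EvenLin gr D) (hD : IsDer m D)
    (hcomm : ∀ x : A, α (D x) = D (α x)) (lam : ℂ)
    (br : A →ₗ[ℂ] A →ₗ[ℂ] A)
    (hbr : ∀ (i j : ZMod 2), ∀ x ∈ gr i, ∀ y ∈ gr j,
      br x y = m x (D y) - sg i j • m y (D x)) :
    SuperHomGD gr br (m.compl₂ D + lam • m) α := by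
  obtain ⟨hα, hmE, hcom, hassoc⟩ := hm
  have hD' : ∀ a b : A, D (m a b) = m (D a) b + m a (D b) := hD
  refine ⟨⟨hα, ?_, ?_, ?_⟩, ⟨hα, ?_, ?_, ?_⟩, ?_⟩
  · -- EvenBilin br
    intro i j x hx y hy
    rw [hbr i j x hx y hy]
    have hyx : m y (D x) ∈ gr (i + j) := by
      have := hmE j i y hy _ (hDeven i x hx); rwa [add_comm j i] at this
    exact Submodule.sub_mem _ (hmE i j x hx _ (hDeven j y hy))
      (Submodule.smul_mem _ _ hyx)
  · -- skew symmetry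
    intro i j x hx y hy
    rw [hbr i j x hx y hy, hbr j i y hy x hx, sg_symm j i]
    rcases sg_cases i j with h1 | h1 <;> simp only [h1] <;> module
  · -- Jacobi
    intro i j k x hx y hy z hz
    have hDx := hDeven i x hx; have hDy := hDeven j y hy; have hDz := hDeven k z hz
    have hDDx := hDeven i _ hDx; have hDDy := hDeven j _ hDy; have hDDz := hDeven k _ hDz
    have hxy : m x (D y) - sg i j • m y (D x) ∈ gr (i + j) := by
      refine Submodule.sub_mem _ (hmE i j x hx _ hDy) (Submodule.smul_mem _ _ ?_)
      have := hmE j i y hy _ hDx; rwa [add_comm j i] at this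
    have hyz : m y (D z) - sg j k • m z (D y) ∈ gr (j + k) := by
      refine Submodule.sub_mem _ (hmE j k y hy _ hDz) (Submodule.smul_mem _ _ ?_)
      have := hmE k j z hz _ hDy; rwa [add_comm k j] at this
    have hzx : m z (D x) - sg k i • m x (D z) ∈ gr (k + i) := by
      refine Submodule.sub_mem _ (hmE k i z hz _ hDx) (Submodule.smul_mem _ _ ?_)
      have := hmE i k x hx _ hDz; rwa [add_comm i k] at this
    rw [hbr i j x hx y hy, hbr j k y hy z hz, hbr k i z hz x hx,
      hbr (i+j) k _ hxy _ (hα k z hz), hbr (j+k) i _ hyz _ (hα i x hx),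
      hbr (k+i) j _ hzx _ (hα j y hy)]
    simp only [sg_add_left, map_sub, map_add, map_smul, LinearMap.sub_apply,
      LinearMap.add_apply, LinearMap.smul_apply, ← hcomm, hD', smul_sub, smul_add, smul_smul]
    rw [hassoc k i j z hz _ hDx _ hDy, hassoc k i j z hz x hx _ hDDy,
      hassoc k j i z hz _ hDy _ hDx, hassoc k j i z hz y hy _ hDDx,
      hassoc i j k x hx _ hDy _ hDz, hassoc i j k x hx y hy _ hDDz,
      hassoc i k j x hx _ hDz _ hDy, hassoc i k j x hx z hz _ hDDy,
      hassoc j k i y hy _ hDz _ hDx, hassoc j k i y hy z hz _ hDDx,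
      hassoc j i k y hy _ hDx _ hDz, hassoc j i k y hy x hx _ hDDz]
    rw [P_zxy gr m α hcom hassoc hDx hDy hz, P_zxy gr m α hcom hassoc hx hDDy hz,
      P_zyx gr m α hcom hassoc hDx hDy hz, P_zyx gr m α hcom hassoc hDDx hy hz,
      P_yx gr m hcom hDx hy (α (D z)), P_yzx gr m α hcom hassoc hDx hy hDz,
      P_xzy gr m α hcom hassoc hx hDy hDz, P_xzy gr m α hcom hassoc hx hDDy hz,
      P_yzx gr m α hcom hassoc hDDx hy hz, P_yx gr m hcom hx hy (α (D (D z)))]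
    try simp only [sg_symm j i, sg_symm k i, sg_symm k j]
    rcases sg_cases i j with h1 | h1 <;> rcases sg_cases i k with h2 | h2 <;>
        rcases sg_cases j k with h3 | h3 <;>
      simp only [h1, h2, h3] <;> module
  · -- EvenBilin c
    intro i j x hx y hy
    simp only [LinearMap.add_apply, LinearMap.smul_apply, LinearMap.compl₂_apply]
    exact Submodule.add_mem _ (hmE i j x hx _ (hDeven j y hy))
      (Submodule.smul_mem _ _ (hmE i j x hx y hy))
  · -- left symmetry
    intro i j k x hx y hy z hz
    have hDx := hDeven i x hx; have hDy := hDeven j y hy; have hDz := hDeven k z hz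
    have hDDz := hDeven k _ hDz
    simp only [LinearMap.add_apply, LinearMap.smul_apply, LinearMap.compl₂_apply]
    simp only [map_add, map_smul, LinearMap.add_apply, LinearMap.smul_apply, ← hcomm, hD',
      smul_add, smul_smul, smul_sub]
    rw [hassoc i j k x hx _ hDy _ hDz, hassoc i j k x hx y hy _ hDDz,
      hassoc i j k x hx _ hDy z hz, hassoc i j k x hx y hy _ hDz,
      hassoc i j k x hx y hy z hz,
      hassoc j i k y hy _ hDx _ hDz, hassoc j i k y hy x hx _ hDDz,
      hassoc j i k y hy _ hDx z hz, hassoc j i k y hy x hx _ hDz,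
      hassoc j i k y hy x hx z hz]
    rw [P_yx gr m hcom hDx hy (α (D z)), P_yx gr m hcom hx hy (α (D (D z))),
      P_yx gr m hcom hDx hy (α z), P_yx gr m hcom hx hy (α (D z)),
      P_yx gr m hcom hx hy (α z)]
    try simp only [sg_symm j i, sg_symm k i, sg_symm k j]
    rcases sg_cases i j with h1 | h1 <;> rcases sg_cases i k with h2 | h2 <;>
        rcases sg_cases j k with h3 | h3 <;>
      simp only [h1, h2, h3] <;> module
  · -- right commutativity
    intro i j k x hx y hy z hz
    have hDy := hDeven j y hy; have hDz := hDeven k z hz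
    simp only [LinearMap.add_apply, LinearMap.smul_apply, LinearMap.compl₂_apply]
    simp only [map_add, map_smul, LinearMap.add_apply, LinearMap.smul_apply, ← hcomm, hD',
      smul_add, smul_smul]
    rw [P_xzy gr m α hcom hassoc hx hDy hDz, P_xzy gr m α hcom hassoc hx hDy hz,
      P_xzy gr m α hcom hassoc hx hy hDz, P_xzy gr m α hcom hassoc hx hy hz]
    try simp only [sg_symm j i, sg_symm k i, sg_symm k j]
    rcases sg_cases i j with h1 | h1 <;> rcases sg_cases i k with h2 | h2 <;>
        rcases sg_cases j k with h3 | h3 <;>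
      simp only [h1, h2, h3] <;> module
  · -- compatibility
    intro i j k x hx y hy z hz
    have hDx := hDeven i x hx; have hDy := hDeven j y hy; have hDz := hDeven k z hz
    have hDDx := hDeven i _ hDx; have hDDy := hDeven j _ hDy; have hDDz := hDeven k _ hDz
    have hcxy : m x (D y) + lam • m x y ∈ gr (i + j) :=
      Submodule.add_mem _ (hmE i j x hx _ hDy) (Submodule.smul_mem _ _ (hmE i j x hx y hy))
    have hcxz : m x (D z) + lam • m x z ∈ gr (i + k) :=
      Submodule.add_mem _ (hmE i k x hx _ hDz) (Submodule.smul_mem _ _ (hmE i k x hx z hz))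
    rw [hbr i j x hx y hy, hbr i k x hx z hz, hbr j k y hy z hz]
    simp only [LinearMap.add_apply, LinearMap.smul_apply, LinearMap.compl₂_apply]
    rw [hbr (i+j) k _ hcxy _ (hα k z hz), hbr (i+k) j _ hcxz _ (hα j y hy)]
    simp only [sg_add_left, map_sub, map_add, map_smul, LinearMap.sub_apply,
      LinearMap.add_apply, LinearMap.smul_apply, ← hcomm, hD', smul_sub, smul_add, smul_smul]
    rw [hassoc k i j z hz _ hDx _ hDy, hassoc k i j z hz x hx _ hDDy,
      hassoc k i j z hz _ hDx y hy, hassoc k i j z hz x hx _ hDy,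
      hassoc j i k y hy _ hDx _ hDz, hassoc j i k y hy x hx _ hDDz,
      hassoc j i k y hy _ hDx z hz, hassoc j i k y hy x hx _ hDz,
      hassoc i j k x hx _ hDy _ hDz, hassoc i j k x hx y hy _ hDDz,
      hassoc i k j x hx _ hDz _ hDy, hassoc i k j x hx z hz _ hDDy,
      hassoc i j k x hx y hy _ hDz, hassoc i k j x hx z hz _ hDy]
    rw [P_zxy gr m α hcom hassoc hDx hDy hz, P_zxy gr m α hcom hassoc hx hDDy hz,
      P_zxy gr m α hcom hassoc hDx hy hz, P_zxy gr m α hcom hassoc hx hDy hz,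
      P_yx gr m hcom hDx hy (α (D z)), P_yx gr m hcom hx hy (α (D (D z))),
      P_yx gr m hcom hDx hy (α z), P_yx gr m hcom hx hy (α (D z)),
      P_xzy gr m α hcom hassoc hx hDy hDz, P_xzy gr m α hcom hassoc hx hDDy hz,
      P_xzy gr m α hcom hassoc hx hDy hz, P_xzy gr m α hcom hassoc hx hy hDz]
    try simp only [sg_symm j i, sg_symm k i, sg_symm k j]
    rcases sg_cases i j with h1 | h1 <;> rcases sg_cases i k with h2 | h2 <;>
        rcases sg_cases j k with h3 | h3 <;>
      simp only [h1, h2, h3] <;> module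


end
end

section
/- Let (A,·) be a commutative associative superalgebra equipped with an even algebra endomorphism α and an even derivation D satisfying Dα = αD, and let λ ∈ ℂ be fixed. Define x∘y = α(x·D(y)) + λ α(x·y) and, on homogeneous elements, [x,y]⁻ = α(x·D(y)) − (−1)^{|x||y|} α(y·D(x)). Then (A, [·,·]⁻, ∘, α) is a super Hom-Gel'fand-Dorfman bialgebra. -/
noncomputable section

variable {A : Type*} [AddCommGroup A] [Module ℂ A]

/-- A commutative associative superalgebra structure on the superspace `(A, gr)`. -/
def CommAssocSuper {A : Type*} [AddCommGroup A] [Module ℂ A]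
    (gr : ZMod 2 → Submodule ℂ A) (m : A →ₗ[ℂ] A →ₗ[ℂ] A) : Prop :=
  EvenBilin gr m ∧
  (∀ (i j : ZMod 2), ∀ x ∈ gr i, ∀ y ∈ gr j, m x y = sg i j • m y x) ∧
  (∀ (i j k : ZMod 2), ∀ x ∈ gr i, ∀ y ∈ gr j, ∀ z ∈ gr k,
    m (m x y) z = m x (m y z))

lemma zmod2_cases : ∀ i : ZMod 2, i = 0 ∨ i = 1 := by decide

lemma sg_eval : ∀ i j : ZMod 2, sg i j = if i = 1 ∧ j = 1 then -1 else 1 := by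
  intro i j
  rcases zmod2_cases i with rfl|rfl <;> rcases zmod2_cases j with rfl|rfl <;>
    simp [sg, show ((1 : ZMod 2)).val = 1 from rfl, show ((0 : ZMod 2)).val = 0 from rfl]

/-- If `(A, ·)` is a commutative associative superalgebra with an even
algebra endomorphism `α` and an even derivation `D` with `Dα = αD`, and `λ ∈ ℂ`, then with
`x∘y = α(x·D(y)) + λ α(x·y)` and `[x,y]⁻ = α(x·D(y)) − (−1)^{|x||y|} α(y·D(x))`
(on homogeneous elements), `(A, [·,·]⁻, ∘, α)` is a super Hom-Gel'fand-Dorfman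
bialgebra. -/
theorem superHomGD_of_commAssoc_endo
    {A : Type*} [AddCommGroup A] [Module ℂ A]
    (gr : ZMod 2 → Submodule ℂ A) (hgr : IsSupergrading gr)
    (m : A →ₗ[ℂ] A →ₗ[ℂ] A) (hm : CommAssocSuper gr m)
    (α : A →ₗ[ℂ] A) (hα : EvenLin gr α)
    (hαhom : ∀ x y : A, α (m x y) = m (α x) (α y))
    (D : A →ₗ[ℂ] A) (hDeven : EvenLin gr D) (hD : IsDer m D)
    (hcomm : ∀ x : A, D (α x) = α (D x)) (lam : ℂ)
    (br : A →ₗ[ℂ] A →ₗ[ℂ] A)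
    (hbr : ∀ (i j : ZMod 2), ∀ x ∈ gr i, ∀ y ∈ gr j,
      br x y = α (m x (D y)) - sg i j • α (m y (D x))) :
    SuperHomGD gr br ((m.compl₂ D + lam • m).compr₂ α) α := by
  obtain ⟨hmE, hmC, hmA⟩ := hm
  have hD' : ∀ x y : A, D (m x y) = m (D x) y + m x (D y) := hD
  set c := (m.compl₂ D + lam • m).compr₂ α with hcdef
  have hc : ∀ u v : A, c u v = α (m u (D v)) + lam • α (m u v) := by
    intro u v
    simp [hcdef, LinearMap.compr₂_apply, LinearMap.compl₂_apply, LinearMap.add_apply,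
      LinearMap.smul_apply, map_add, map_smul]
  have C12 : ∀ (r s t : ZMod 2) (u v w : A), u ∈ gr r → v ∈ gr s → w ∈ gr t →
      m u (m v w) = sg r s • m v (m u w) := by
    intro r s t u v w hu hv hw
    rw [← hmA r s t u hu v hv w hw, hmC r s u hu v hv]
    simp only [map_smul, LinearMap.smul_apply]
    rw [hmA s r t v hv u hu w hw]
  have C23 : ∀ (s t : ZMod 2) (u v w : A), v ∈ gr s → w ∈ gr t →
      m u (m v w) = sg s t • m u (m w v) := by
    intro s t u v w hv hw
    rw [hmC s t v hv w hw, map_smul]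
  have hmem_br : ∀ (r s : ZMod 2) (u v : A), u ∈ gr r → v ∈ gr s →
      br u v ∈ gr (r + s) := by
    intro r s u v hu hv
    have h1 : m v (D u) ∈ gr (r + s) := by
      rw [add_comm]; exact hmE s r v hv (D u) (hDeven r u hu)
    rw [hbr r s u hu v hv]
    exact sub_mem (hα _ _ (hmE r s u hu (D v) (hDeven s v hv)))
      (Submodule.smul_mem _ _ (hα _ _ h1))
  have hmem_c : ∀ (r s : ZMod 2) (u v : A), u ∈ gr r → v ∈ gr s →
      c u v ∈ gr (r + s) := by
    intro r s u v hu hv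
    rw [hc u v]
    exact add_mem (hα _ _ (hmE r s u hu (D v) (hDeven s v hv)))
      (Submodule.smul_mem _ _ (hα _ _ (hmE r s u hu v hv)))
  have Ecc : ∀ u v w : A, c (c u v) (α w) =
      α (α (m (m u (D v)) (D w))) + lam • α (α (m (m u v) (D w)))
        + lam • α (α (m (m u (D v)) w)) + (lam * lam) • α (α (m (m u v) w)) := by
    intro u v w
    simp only [hc, map_add, map_sub, map_smul, LinearMap.add_apply, LinearMap.sub_apply,
      LinearMap.smul_apply, smul_add, smul_sub, hD', hcomm, ← hαhom]
    module
  have Ecc2 : ∀ u v w : A, c (α u) (c v w) =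
      α (α (m u (m (D v) (D w)))) + α (α (m u (m v (D (D w)))))
        + lam • α (α (m u (m (D v) w))) + (lam + lam) • α (α (m u (m v (D w))))
        + (lam * lam) • α (α (m u (m v w))) := by
    intro u v w
    simp only [hc, map_add, map_sub, map_smul, LinearMap.add_apply, LinearMap.sub_apply,
      LinearMap.smul_apply, smul_add, smul_sub, hD', hcomm, ← hαhom]
    module
  have Ebrbr : ∀ (r s t : ZMod 2) (u v w : A), u ∈ gr r → v ∈ gr s → w ∈ gr t →
      br (br u v) (α w) =
        α (α (m (m u (D v)) (D w))) - sg r s • α (α (m (m v (D u)) (D w)))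
          - sg (r+s) t • α (α (m w (m (D u) (D v))))
          - sg (r+s) t • α (α (m w (m u (D (D v)))))
          + (sg (r+s) t * sg r s) • α (α (m w (m (D v) (D u))))
          + (sg (r+s) t * sg r s) • α (α (m w (m v (D (D u))))) := by
    intro r s t u v w hu hv hw
    rw [hbr (r+s) t _ (hmem_br r s u v hu hv) _ (hα t w hw), hbr r s u hu v hv]
    simp only [map_add, map_sub, map_smul, LinearMap.add_apply, LinearMap.sub_apply,
      LinearMap.smul_apply, smul_add, smul_sub, hD', hcomm, ← hαhom]
    module
  have Ebrc : ∀ (r s t : ZMod 2) (u v w : A), u ∈ gr r → v ∈ gr s → w ∈ gr t →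
      br (c u v) (α w) =
        α (α (m (m u (D v)) (D w))) + lam • α (α (m (m u v) (D w)))
          - sg (r+s) t • α (α (m w (m (D u) (D v))))
          - sg (r+s) t • α (α (m w (m u (D (D v)))))
          - (sg (r+s) t * lam) • α (α (m w (m (D u) v)))
          - (sg (r+s) t * lam) • α (α (m w (m u (D v)))) := by
    intro r s t u v w hu hv hw
    rw [hbr (r+s) t _ (hmem_c r s u v hu hv) _ (hα t w hw)]
    simp only [hc, map_add, map_sub, map_smul, LinearMap.add_apply, LinearMap.sub_apply,
      LinearMap.smul_apply, smul_add, smul_sub, hD', hcomm, ← hαhom]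
    module
  have Ecbr : ∀ (r s : ZMod 2) (u v : A), u ∈ gr r → v ∈ gr s → ∀ w : A,
      c (br u v) (α w) =
        α (α (m (m u (D v)) (D w))) - sg r s • α (α (m (m v (D u)) (D w)))
          + lam • α (α (m (m u (D v)) w)) - (sg r s * lam) • α (α (m (m v (D u)) w)) := by
    intro r s u v hu hv w
    rw [hbr r s u hu v hv]
    simp only [hc, map_add, map_sub, map_smul, LinearMap.add_apply, LinearMap.sub_apply,
      LinearMap.smul_apply, smul_add, smul_sub, hD', hcomm, ← hαhom]
    module
  have Ecabr : ∀ (s t : ZMod 2) (v w : A), v ∈ gr s → w ∈ gr t → ∀ u : A,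
      c (α u) (br v w) =
        α (α (m u (m (D v) (D w)))) + α (α (m u (m v (D (D w)))))
          - sg s t • α (α (m u (m (D w) (D v)))) - sg s t • α (α (m u (m w (D (D v)))))
          + lam • α (α (m u (m v (D w)))) - (sg s t * lam) • α (α (m u (m w (D v)))) := by
    intro s t v w hv hw u
    rw [hbr s t v hv w hw]
    simp only [hc, map_add, map_sub, map_smul, LinearMap.add_apply, LinearMap.sub_apply,
      LinearMap.smul_apply, smul_add, smul_sub, hD', hcomm, ← hαhom]
    module
  refine ⟨⟨hα, ?_, ?_, ?_⟩, ⟨hα, ?_, ?_, ?_⟩, ?_⟩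
  · -- br is even bilinear
    intro i j x hx y hy
    exact hmem_br i j x y hx hy
  · -- skew-symmetry
    intro i j x hx y hy
    rw [hbr i j x hx y hy, hbr j i y hy x hx]
    match_scalars <;>
      (rcases zmod2_cases i with rfl|rfl <;> rcases zmod2_cases j with rfl|rfl <;>
        simp (config := { decide := true }) [sg_eval] <;> ring)
  · -- Hom-Jacobi
    intro i j k x hx y hy z hz
    have hDx := hDeven i x hx; have hDy := hDeven j y hy; have hDz := hDeven k z hz
    have hD2x := hDeven i _ hDx; have hD2y := hDeven j _ hDy; have hD2z := hDeven k _ hDz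
    rw [Ebrbr i j k x y z hx hy hz, Ebrbr j k i y z x hy hz hx, Ebrbr k i j z x y hz hx hy]
    rw [hmA i j k x hx (D y) hDy (D z) hDz, hmA j i k y hy (D x) hDx (D z) hDz,
      hmA j k i y hy (D z) hDz (D x) hDx, hmA k j i z hz (D y) hDy (D x) hDx,
      hmA k i j z hz (D x) hDx (D y) hDy, hmA i k j x hx (D z) hDz (D y) hDy]
    rw [C23 k j x (D z) (D y) hDz hDy, C23 j i z (D y) (D x) hDy hDx,
      C23 k i y (D z) (D x) hDz hDx,
      C23 j i z y (D (D x)) hy hD2x, C23 k i y z (D (D x)) hz hD2x]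
    rw [C12 j i k y (D x) (D z) hy hDx hDz, C12 k i j z (D x) (D y) hz hDx hDy,
      C12 k i j z (D (D x)) y hz hD2x hy, C12 j i k y (D (D x)) z hy hD2x hz,
      C12 j i k y x (D (D z)) hy hx hD2z, C12 k i j z x (D (D y)) hz hx hD2y]
    rw [C23 k j (D x) z (D y) hz hDy,
      C23 k j (D (D x)) z y hz hy, C23 k j x z (D (D y)) hz hD2y]
    simp only [map_smul, smul_smul]
    match_scalars <;>
      (rcases zmod2_cases i with rfl|rfl <;> rcases zmod2_cases j with rfl|rfl <;>
        rcases zmod2_cases k with rfl|rfl <;>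
        simp (config := { decide := true }) [sg_eval] <;> ring)
  · -- c is even bilinear
    intro i j x hx y hy
    exact hmem_c i j x y hx hy
  · -- Hom-Novikov left symmetry
    intro i j k x hx y hy z hz
    have hDx := hDeven i x hx; have hDy := hDeven j y hy; have hDz := hDeven k z hz
    have hD2z := hDeven k _ hDz
    rw [Ecc x y z, Ecc y x z, Ecc2 x y z, Ecc2 y x z]
    rw [hmA i j k x hx (D y) hDy (D z) hDz, hmA i j k x hx y hy (D z) hDz,
      hmA i j k x hx (D y) hDy z hz, hmA i j k x hx y hy z hz,
      hmA j i k y hy (D x) hDx (D z) hDz, hmA j i k y hy x hx (D z) hDz,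
      hmA j i k y hy (D x) hDx z hz, hmA j i k y hy x hx z hz]
    rw [C12 j i k y (D x) (D z) hy hDx hDz, C12 j i k y x (D z) hy hx hDz,
      C12 j i k y (D x) z hy hDx hz, C12 j i k y x z hy hx hz,
      C12 j i k y x (D (D z)) hy hx hD2z]
    simp only [map_smul, smul_smul]
    match_scalars <;>
      (rcases zmod2_cases i with rfl|rfl <;> rcases zmod2_cases j with rfl|rfl <;>
        rcases zmod2_cases k with rfl|rfl <;>
        simp (config := { decide := true }) [sg_eval] <;> ring)
  · -- Hom-Novikov right commutativity
    intro i j k x hx y hy z hz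
    have hDy := hDeven j y hy; have hDz := hDeven k z hz
    rw [Ecc x y z, Ecc x z y]
    rw [hmA i j k x hx (D y) hDy (D z) hDz, hmA i j k x hx y hy (D z) hDz,
      hmA i j k x hx (D y) hDy z hz, hmA i j k x hx y hy z hz,
      hmA i k j x hx (D z) hDz (D y) hDy, hmA i k j x hx z hz (D y) hDy,
      hmA i k j x hx (D z) hDz y hy, hmA i k j x hx z hz y hy]
    rw [C23 k j x (D z) (D y) hDz hDy, C23 k j x z (D y) hz hDy,
      C23 k j x (D z) y hDz hy, C23 k j x z y hz hy]
    simp only [map_smul, smul_smul]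
    match_scalars <;>
      (rcases zmod2_cases i with rfl|rfl <;> rcases zmod2_cases j with rfl|rfl <;>
        rcases zmod2_cases k with rfl|rfl <;>
        simp (config := { decide := true }) [sg_eval] <;> ring)
  · -- compatibility
    intro i j k x hx y hy z hz
    have hDx := hDeven i x hx; have hDy := hDeven j y hy; have hDz := hDeven k z hz
    have hD2y := hDeven j _ hDy; have hD2z := hDeven k _ hDz
    rw [Ebrc i j k x y z hx hy hz, Ebrc i k j x z y hx hz hy,
      Ecbr i j x y hx hy z, Ecbr i k x z hx hz y, Ecabr j k y z hy hz x]
    rw [hmA i j k x hx (D y) hDy (D z) hDz, hmA i j k x hx y hy (D z) hDz,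
      hmA i k j x hx (D z) hDz (D y) hDy, hmA i k j x hx z hz (D y) hDy,
      hmA j i k y hy (D x) hDx (D z) hDz, hmA i j k x hx (D y) hDy z hz,
      hmA j i k y hy (D x) hDx z hz, hmA k i j z hz (D x) hDx (D y) hDy,
      hmA i k j x hx (D z) hDz y hy, hmA k i j z hz (D x) hDx y hy]
    rw [C12 j i k y x (D (D z)) hy hx hD2z, C12 j i k y (D x) (D z) hy hDx hDz,
      C12 j i k y (D x) z hy hDx hz, C12 j i k y x (D z) hy hx hDz,
      C12 k i j z (D x) (D y) hz hDx hDy, C12 k i j z x (D (D y)) hz hx hD2y,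
      C12 k i j z (D x) y hz hDx hy, C12 k i j z x (D y) hz hx hDy]
    rw [C23 k j x (D z) (D y) hDz hDy, C23 k j x z (D y) hz hDy,
      C23 k j x (D z) y hDz hy, C23 k j x z (D (D y)) hz hD2y,
      C23 k j (D x) z (D y) hz hDy, C23 k j (D x) z y hz hy]
    simp only [map_smul, smul_smul]
    match_scalars <;>
      (rcases zmod2_cases i with rfl|rfl <;> rcases zmod2_cases j with rfl|rfl <;>
        rcases zmod2_cases k with rfl|rfl <;>
        simp (config := { decide := true }) [sg_eval] <;> ring)

end
end
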